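/- arXiv:2002.08086 — 13 statements merged into one kernel-verified Lean document; each statement's English description precedes it below -/
import Mathlib

section
/- Let G be a group in which commensurable elements commute and which is torsion-free with unique roots (g^n = h^n for n ≠ 0 implies g = h). If g, h ∈ G are commensurable (there exist nonzero integers p, q with g^p = h^q), then the subgroup generated by g and h is cyclic. -/
/-- If in a torsion-free group with unique roots, commensurable elements commute,
then two commensurable elements generate a cyclic subgroup. -/
theorem stmt0 {G : Type*} [Group G]
    (hcomm : ∀ a b : G, (∃ p q : ℤ, p ≠ 0 ∧ q ≠ 0 ∧ a ^ p = b ^ q) → Commute a b)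
    (htf : ∀ a : G, a ≠ 1 → ∀ n : ℤ, n ≠ 0 → a ^ n ≠ 1)
    (hroots : ∀ a b : G, ∀ n : ℤ, n ≠ 0 → a ^ n = b ^ n → a = b)
    (g h : G) (p q : ℤ) (hp : p ≠ 0) (hq : q ≠ 0) (hgh : g ^ p = h ^ q) :
    ∃ a : G, Subgroup.closure {g, h} = Subgroup.zpowers a := by
  have hC : Commute g h := hcomm g h ⟨p, q, hp, hq, hgh⟩
  set d : ℤ := (Int.gcd p q : ℤ) with hd_def
  have hd : d ≠ 0 := by
    simpa [hd_def, Int.gcd_eq_zero_iff] using fun h1 _ => hp h1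
  set p' : ℤ := p / d with hp'_def
  set q' : ℤ := q / d with hq'_def
  have hpd : p' * d = p := Int.ediv_mul_cancel (Int.gcd_dvd_left p q)
  have hqd : q' * d = q := Int.ediv_mul_cancel (Int.gcd_dvd_right p q)
  have hp' : p' ≠ 0 := fun h0 => hp (by rw [← hpd, h0, zero_mul])
  have hq' : q' ≠ 0 := fun h0 => hq (by rw [← hqd, h0, zero_mul])
  have hcop : Int.gcd p' q' = 1 := by
    apply Int.gcd_div_gcd_div_gcd
    have : Int.gcd p q ≠ 0 := fun h0 => hp (Int.gcd_eq_zero_iff.mp h0).1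
    omega
  -- c = g ^ p' = h ^ q'
  set c : G := g ^ p' with hc_def
  have hhc : h ^ q' = c := by
    apply hroots _ _ d hd
    rw [hc_def, ← zpow_mul, ← zpow_mul, hpd, hqd, hgh]
  -- Bezout
  obtain ⟨A, B, hAB⟩ : ∃ A B : ℤ, 1 = p' * A + q' * B := by
    refine ⟨Int.gcdA p' q', Int.gcdB p' q', ?_⟩
    have := Int.gcd_eq_gcd_ab p' q'
    rw [hcop] at this
    exact_mod_cast this
  set a : G := g ^ B * h ^ A with ha_def
  have hCab : Commute (g ^ B) (h ^ A) := hC.zpow_zpow B A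
  have hgc : ∀ k : ℤ, g ^ (p' * k) = c ^ k := fun k => by rw [zpow_mul]
  have hhcpow : ∀ k : ℤ, h ^ (q' * k) = c ^ k := fun k => by rw [zpow_mul, hhc]
  have hapq : a ^ (p' * q') = c := by
    have e1 : B * (p' * q') = p' * (B * q') := by ring
    have e2 : A * (p' * q') = q' * (A * p') := by ring
    calc a ^ (p' * q') = g ^ (B * (p' * q')) * h ^ (A * (p' * q')) := by
          rw [ha_def, hCab.mul_zpow, ← zpow_mul, ← zpow_mul]
      _ = c ^ (B * q') * c ^ (A * p') := by rw [e1, e2, hgc, hhcpow]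
      _ = c ^ (B * q' + A * p') := by rw [← zpow_add]
      _ = c ^ (1 : ℤ) := by rw [show B * q' + A * p' = 1 by rw [hAB]; ring]
      _ = c := zpow_one c
  have hpq' : p' * q' ≠ 0 := mul_ne_zero hp' hq'
  have hag : a ^ q' = g := by
    apply hroots _ _ (p' * q') hpq'
    rw [← zpow_mul, mul_comm q' (p' * q'), zpow_mul, hapq, hc_def, ← zpow_mul,
      mul_comm p' q', zpow_mul]
  have hah : a ^ p' = h := by
    apply hroots _ _ (p' * q') hpq'
    rw [← zpow_mul, mul_comm p' (p' * q'), zpow_mul, hapq, ← hhc, ← zpow_mul,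
      mul_comm q' p', zpow_mul]
  refine ⟨a, le_antisymm ?_ ?_⟩
  · rw [Subgroup.closure_le]
    rintro x (rfl | rfl)
    · exact ⟨q', hag⟩
    · exact ⟨p', hah⟩
  · rw [Subgroup.zpowers_le]
    exact mul_mem (zpow_mem (Subgroup.subset_closure (by simp)) B)
      (zpow_mem (Subgroup.subset_closure (by simp)) A)
end

section
/- Let G be a torsion-free group with the unique roots property in which commensurable elements commute, and let U ⊆ G be a finite set of pairwise commensurable elements. Then the subgroup ⟨U⟩ generated by U is cyclic. -/
/-- In a torsion-free group with unique roots in which commensurable elements commute,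
a finite set of pairwise commensurable elements generates a cyclic subgroup. -/
theorem stmt1 {G : Type*} [Group G]
    (hcomm : ∀ a b : G, (∃ p q : ℤ, p ≠ 0 ∧ q ≠ 0 ∧ a ^ p = b ^ q) → Commute a b)
    (htf : ∀ a : G, a ≠ 1 → ∀ n : ℤ, n ≠ 0 → a ^ n ≠ 1)
    (hroots : ∀ a b : G, ∀ n : ℤ, n ≠ 0 → a ^ n = b ^ n → a = b)
    (U : Finset G)
    (hU : ∀ g ∈ U, ∀ h ∈ U, ∃ p q : ℤ, p ≠ 0 ∧ q ≠ 0 ∧ g ^ p = h ^ q) :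
    ∃ a : G, Subgroup.closure (U : Set G) = Subgroup.zpowers a := by
  rcases U.eq_empty_or_nonempty with hUe | ⟨g, hg⟩
  · refine ⟨1, ?_⟩
    rw [hUe]
    simp [Subgroup.zpowers_one_eq_bot]
  classical
  set H := Subgroup.closure (U : Set G) with hH
  -- elements of H pairwise commute
  have hHcomm : ∀ x ∈ H, ∀ y ∈ H, Commute x y := by
    intro x hx y hy
    refine Subgroup.closure_induction₂
      (p := fun a b _ _ => Commute a b)
      (fun a b ha hb => hcomm a b (hU a ha b hb))
      (fun a _ => Commute.one_left a) (fun a _ => Commute.one_right a)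
      (fun a b c _ _ _ h1 h2 => h1.mul_left h2)
      (fun a b c _ _ _ h1 h2 => h1.mul_right h2)
      (fun a b _ _ h => h.inv_left)
      (fun a b _ _ h => h.inv_right) hx hy
  -- a common exponent Q sending all generators into zpowers g
  have key : ∀ s : Finset G, (∀ h ∈ s, ∃ p q : ℤ, q ≠ 0 ∧ h ^ q = g ^ p) →
      ∃ Q : ℤ, Q ≠ 0 ∧ ∀ h ∈ s, ∃ m : ℤ, h ^ Q = g ^ m := by
    intro s
    induction s using Finset.induction with
    | empty => exact fun _ => ⟨1, one_ne_zero, fun h hh => absurd hh (by simp)⟩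
    | @insert a s ha ih =>
      intro hs
      obtain ⟨Q, hQ, hQs⟩ := ih fun h hh => hs h (Finset.mem_insert_of_mem hh)
      obtain ⟨p, q, hq, hpq⟩ := hs a (Finset.mem_insert_self a s)
      refine ⟨Q * q, mul_ne_zero hQ hq, fun h hh => ?_⟩
      rcases Finset.mem_insert.mp hh with rfl | hh
      · exact ⟨p * Q, by rw [mul_comm Q q, zpow_mul, hpq, ← zpow_mul]⟩
      · obtain ⟨m, hm⟩ := hQs h hh
        exact ⟨m * q, by rw [zpow_mul, hm, ← zpow_mul]⟩
  obtain ⟨Q, hQ, hQU⟩ := key U (fun h hh => by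
    obtain ⟨p, q, hp, hq, hpq⟩ := hU h hh g hg
    exact ⟨q, p, hp, hpq⟩)
  -- subgroup of elements of H whose Q-th power is a power of g
  let K : Subgroup G :=
    { carrier := {x | x ∈ H ∧ ∃ m : ℤ, x ^ Q = g ^ m}
      one_mem' := ⟨one_mem H, 0, by simp⟩
      mul_mem' := by
        rintro x y ⟨hx, m, hm⟩ ⟨hy, n, hn⟩
        exact ⟨mul_mem hx hy, m + n,
          by rw [(hHcomm x hx y hy).mul_zpow, hm, hn, zpow_add]⟩
      inv_mem' := by
        rintro x ⟨hx, m, hm⟩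
        exact ⟨inv_mem hx, -m, by rw [inv_zpow, hm, zpow_neg]⟩ }
  have hHK : ∀ x ∈ H, x ∈ H ∧ ∃ m : ℤ, x ^ Q = g ^ m := by
    intro x hx
    exact Subgroup.closure_le (K := K) |>.mpr
      (fun h hh => ⟨Subgroup.subset_closure hh, hQU h hh⟩) hx
  -- the additive subgroup of exponents
  let E : AddSubgroup ℤ :=
    { carrier := {n | ∃ x ∈ H, x ^ Q = g ^ n}
      zero_mem' := ⟨1, one_mem H, by simp⟩
      add_mem' := by
        rintro m n ⟨x, hx, hm⟩ ⟨y, hy, hn⟩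
        exact ⟨x * y, mul_mem hx hy,
          by rw [(hHcomm x hx y hy).mul_zpow, hm, hn, zpow_add]⟩
      neg_mem' := by
        rintro m ⟨x, hx, hm⟩
        exact ⟨x⁻¹, inv_mem hx, by rw [inv_zpow, hm, zpow_neg]⟩ }
  obtain ⟨d, hd⟩ := Int.subgroup_cyclic E
  have hdE : d ∈ E := by rw [hd]; exact AddSubgroup.mem_closure_singleton.mpr ⟨1, one_smul _ _⟩
  obtain ⟨x0, hx0H, hx0⟩ := hdE
  refine ⟨x0, le_antisymm ?_ ((Subgroup.zpowers_le).mpr hx0H)⟩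
  intro x hx
  obtain ⟨-, n, hn⟩ := hHK x hx
  have hnE : n ∈ E := ⟨x, hx, hn⟩
  rw [hd] at hnE
  obtain ⟨k, hk⟩ := AddSubgroup.mem_closure_singleton.mp hnE
  have : x ^ Q = (x0 ^ k) ^ Q := by
    rw [← zpow_mul, mul_comm k Q, zpow_mul, hx0, ← zpow_mul, hn, ← hk]
    simp [mul_comm]
  exact (hroots x (x0 ^ k) Q hQ this) ▸ Subgroup.zpow_mem _ (Subgroup.mem_zpowers x0) k
end

section
/- Let G be a torsion-free group and g₁, g₂ ∈ G with g₁ ≠ 1. Then the subgroup S₁ = {(x, y) ∈ ℤ² : g₁^x g₂^y = 1} of ℤ² is cyclic, i.e., generated by a single element. -/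
/-- In a torsion-free group, if `g₁ ≠ 1`, the solution set of `g₁^x g₂^y = 1`
is a cyclic subgroup of `ℤ²`. -/
theorem stmt3 {G : Type*} [Group G]
    (htf : ∀ a : G, a ≠ 1 → ∀ n : ℤ, n ≠ 0 → a ^ n ≠ 1)
    (g₁ g₂ : G) (hg₁ : g₁ ≠ 1) :
    ∃ v : ℤ × ℤ,
      {p : ℤ × ℤ | g₁ ^ p.1 * g₂ ^ p.2 = 1} =
        (AddSubgroup.zmultiples v : Set (ℤ × ℤ)) := by
  have hinj : ∀ x : ℤ, g₁ ^ x = 1 → x = 0 := by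
    intro x hx
    by_contra h
    exact htf g₁ hg₁ x h hx
  have hone : ∀ x y : ℤ, g₁ ^ x * g₂ ^ y = 1 ↔ g₂ ^ y = g₁ ^ (-x) := by
    intro x y
    rw [zpow_neg]
    constructor
    · intro h; exact (inv_eq_of_mul_eq_one_right h).symm
    · intro h; rw [h, mul_inv_cancel]
  set H : AddSubgroup ℤ :=
    { carrier := {y : ℤ | ∃ x : ℤ, g₂ ^ y = g₁ ^ x}
      zero_mem' := ⟨0, by simp⟩
      add_mem' := by
        rintro a b ⟨x, hx⟩ ⟨x', hx'⟩
        exact ⟨x + x', by rw [zpow_add, zpow_add, hx, hx']⟩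
      neg_mem' := by
        rintro a ⟨x, hx⟩
        exact ⟨-x, by rw [zpow_neg, zpow_neg, hx]⟩ } with hH
  obtain ⟨d, hd⟩ := Int.subgroup_cyclic H
  have hdH : d ∈ H := by rw [hd]; exact AddSubgroup.subset_closure rfl
  obtain ⟨x₀, hx₀⟩ := hdH
  refine ⟨(-x₀, d), ?_⟩
  ext ⟨x, y⟩
  simp only [Set.mem_setOf_eq, SetLike.mem_coe, AddSubgroup.mem_zmultiples_iff,
    Prod.smul_mk, smul_eq_mul, Prod.ext_iff, Prod.mk.injEq]
  constructor
  · intro h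
    have hy : y ∈ H := ⟨-x, (hone x y).mp h⟩
    rw [hd, ← AddSubgroup.zmultiples_eq_closure, AddSubgroup.mem_zmultiples_iff] at hy
    obtain ⟨k, hk⟩ := hy
    refine ⟨k, ?_, hk⟩
    -- show k • -x₀ = x
    have h1 : g₂ ^ y = g₁ ^ (-x) := (hone x y).mp h
    have h2 : g₂ ^ y = g₁ ^ (k * x₀) := by
      rw [← hk]
      show g₂ ^ (k * d) = _
      rw [mul_comm k d, zpow_mul, hx₀, ← zpow_mul, mul_comm x₀ k]
    have h3 : g₁ ^ (k * x₀ + x) = 1 := by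
      rw [zpow_add, ← h2, h1, ← zpow_add, neg_add_cancel, zpow_zero]
    have := hinj _ h3
    have : x = k * (-x₀) := by linarith
    simpa [smul_eq_mul] using this.symm
  · rintro ⟨k, hkx, hky⟩
    have hx' : x = k * (-x₀) := by simpa [smul_eq_mul] using hkx.symm
    have hy' : y = k * d := by simpa [smul_eq_mul] using hky.symm
    rw [hone, hx', hy']
    rw [mul_comm k d, zpow_mul, hx₀, ← zpow_mul]
    ring_nf
end

section
/- For vectors a, b ∈ ℤⁿ \ {0} there exist integers s, t with |s| ≤ ‖b‖∞ and |t| ≤ ‖a‖∞ such that {(x, y) ∈ ℤ² : x • a = y • b} equals the cyclic subgroup of ℤ² generated by (s, t). -/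
/-- For nonzero integer vectors `a, b ∈ ℤⁿ` the solution set of `x • a = y • b`
is generated by a single pair `(s, t)` with `|s| ≤ ‖b‖∞` and `|t| ≤ ‖a‖∞`. -/
theorem stmt5 {n : ℕ} (a b : Fin n → ℤ) (ha : a ≠ 0) (hb : b ≠ 0) :
    ∃ s t : ℤ,
      s.natAbs ≤ Finset.univ.sup (fun i => (b i).natAbs) ∧
      t.natAbs ≤ Finset.univ.sup (fun i => (a i).natAbs) ∧
      ∀ x y : ℤ, x • a = y • b ↔ ∃ k : ℤ, x = k * s ∧ y = k * t := by
  obtain ⟨i, hi⟩ := Function.ne_iff.mp ha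
  obtain ⟨j, hj⟩ := Function.ne_iff.mp hb
  have hi : a i ≠ 0 := by simpa using hi
  have hj : b j ≠ 0 := by simpa using hj
  set T : AddSubgroup ℤ :=
    { carrier := {y | ∃ x : ℤ, x • a = y • b}
      zero_mem' := ⟨0, by simp⟩
      add_mem' := by
        rintro y1 y2 ⟨x1, h1⟩ ⟨x2, h2⟩
        exact ⟨x1 + x2, by rw [add_smul, add_smul, h1, h2]⟩
      neg_mem' := by
        rintro y ⟨x, h⟩
        exact ⟨-x, by rw [neg_smul, neg_smul, h]⟩ } with hTdef
  obtain ⟨t, hT⟩ := Int.subgroup_cyclic T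
  have ht : t ∈ T := by
    rw [hT]
    exact AddSubgroup.mem_closure_singleton.mpr ⟨1, one_smul _ _⟩
  obtain ⟨s, hs⟩ := ht
  have hst : ∀ i', s * a i' = t * b i' := by
    intro i'
    have := congrFun hs i'
    simpa using this
  have hmemT : ∀ y : ℤ, y ∈ T ↔ ∃ k : ℤ, k * t = y := by
    intro y
    rw [hT, AddSubgroup.mem_closure_singleton]
    simp [smul_eq_mul]
  rcases eq_or_ne t 0 with ht0 | ht0
  · -- only the trivial solution
    have hs0 : s = 0 := by
      have : s • a = (0 : ℤ) • b := by rw [← ht0]; exact hs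
      simp only [zero_smul] at this
      rcases smul_eq_zero.mp this with h | h
      · exact h
      · exact absurd h ha
    refine ⟨0, 0, Nat.zero_le _, Nat.zero_le _, fun x y => ?_⟩
    constructor
    · intro hxy
      have hyT : y ∈ T := ⟨x, hxy⟩
      obtain ⟨k, hk⟩ := (hmemT y).mp hyT
      rw [ht0, mul_zero] at hk
      subst hk
      have : x • a = (0 : Fin n → ℤ) := by simpa using hxy
      rcases smul_eq_zero.mp this with h | h
      · exact ⟨0, by simp [h]⟩
      · exact absurd h ha
    · rintro ⟨k, hx, hy⟩
      simp [hx, hy]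
  · -- nontrivial case: gcd s t = 1
    have hgcd : Int.gcd s t = 1 := by
      set d : ℤ := (Int.gcd s t : ℤ) with hddef
      have hdt : d ∣ t := Int.gcd_dvd_right s t
      have hds : d ∣ s := Int.gcd_dvd_left s t
      have hd0 : d ≠ 0 := by
        simp only [hddef, ne_eq, Int.natCast_eq_zero, Int.gcd_eq_zero_iff, not_and]
        intro _; exact ht0
      obtain ⟨t', hdt'⟩ := hdt
      obtain ⟨s', hds'⟩ := hds
      have ht'0 : t' ≠ 0 := fun h => ht0 (by simp [hdt', h])
      have hst' : ∀ i', s' * a i' = t' * b i' := by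
        intro i'
        have h1 := hst i'
        rw [hds', hdt'] at h1
        have h2 : d * (s' * a i') = d * (t' * b i') := by linarith [h1]
        exact mul_left_cancel₀ hd0 h2
      have ht'T : t' ∈ T := ⟨s', funext fun i' => by simpa using hst' i'⟩
      obtain ⟨k, hk⟩ := (hmemT t').mp ht'T
      have hdvd : t ∣ t' := ⟨k, by rw [← hk]; ring⟩
      rw [hdt'] at hdvd
      have h1 : (d * t').natAbs ∣ t'.natAbs := Int.natAbs_dvd_natAbs.mpr hdvd
      have h2 : d.natAbs * t'.natAbs ≤ t'.natAbs := by
        rw [← Int.natAbs_mul]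
        exact Nat.le_of_dvd (Int.natAbs_pos.mpr ht'0) h1
      have h3 : d.natAbs ≤ 1 := by
        have := Int.natAbs_pos.mpr ht'0
        nlinarith
      have h4 : d.natAbs ≠ 0 := fun h => hd0 (Int.natAbs_eq_zero.mp h)
      have : d.natAbs = 1 := le_antisymm h3 (Nat.one_le_iff_ne_zero.mpr h4)
      simpa [hddef] using this
    have hcop : IsCoprime s t := Int.isCoprime_iff_gcd_eq_one.mpr hgcd
    -- divisibility: t ∣ a i', s ∣ b i'
    have hta : ∀ i', t ∣ a i' := by
      intro i'
      have : t ∣ s * a i' := ⟨b i', hst i'⟩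
      exact (hcop.symm).dvd_of_dvd_mul_left this
    have hsb : ∀ i', s ∣ b i' := by
      intro i'
      have : s ∣ t * b i' := ⟨a i', (hst i').symm⟩
      exact hcop.dvd_of_dvd_mul_left this
    refine ⟨s, t, ?_, ?_, ?_⟩
    · calc s.natAbs ≤ (b j).natAbs :=
            Nat.le_of_dvd (Int.natAbs_pos.mpr hj) (Int.natAbs_dvd_natAbs.mpr (hsb j))
        _ ≤ _ := Finset.le_sup (f := fun i => (b i).natAbs) (Finset.mem_univ j)
    · calc t.natAbs ≤ (a i).natAbs :=
            Nat.le_of_dvd (Int.natAbs_pos.mpr hi) (Int.natAbs_dvd_natAbs.mpr (hta i))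
        _ ≤ _ := Finset.le_sup (f := fun i => (a i).natAbs) (Finset.mem_univ i)
    · intro x y
      constructor
      · intro hxy
        have hyT : y ∈ T := ⟨x, hxy⟩
        obtain ⟨k, hk⟩ := (hmemT y).mp hyT
        refine ⟨k, ?_, hk.symm⟩
        have h1 : x * a i = y * b i := by simpa using congrFun hxy i
        have h2 : x * a i = (k * s) * a i := by
          rw [h1, ← hk]
          linear_combination (-k) * (hst i)
        exact mul_right_cancel₀ hi h2
      · rintro ⟨k, rfl, rfl⟩
        rw [mul_smul, mul_smul, hs]
end

section
/- Let A be an abelian group and let f₁, …, f_m : ℕ → A be periodic functions with periods q₁, …, q_m respectively. If the sum f = f₁ + ⋯ + f_m satisfies f(t) = 0 for all t < q₁ + ⋯ + q_m, then f(t) = 0 for all t ∈ ℕ. -/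
private theorem aux8 {A : Type*} [AddCommGroup A] :
    ∀ (m : ℕ) (f : Fin m → ℕ → A) (q : Fin m → ℕ),
    (∀ i, 1 ≤ q i) →
    (∀ i t, f i (t + q i) = f i t) →
    (∀ t < ∑ i, q i, (∑ i, f i t) = 0) →
    ∀ t, (∑ i, f i t) = 0 := by
  intro m
  induction m with
  | zero => intro f q hq hper h0 t; simp
  | succ n ih =>
    intro f q hq hper h0
    set ql := q (Fin.last n) with hql
    -- differenced functions
    have key : ∀ t, (∑ i, f i (t + ql)) - (∑ i, f i t) = 0 := by
      have := ih (fun i t => f i.castSucc (t + ql) - f i.castSucc t)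
        (fun i => q i.castSucc) (fun i => hq _)
        (by
          intro i t
          have h1 : t + q i.castSucc + ql = t + ql + q i.castSucc := by ring
          rw [h1, hper, hper])
        (by
          intro t ht
          rw [Finset.sum_sub_distrib]
          have hQ : (∑ i : Fin (n+1), q i) = (∑ i : Fin n, q i.castSucc) + ql := by
            rw [Fin.sum_univ_castSucc]
          have h1 : (∑ i : Fin n, f i.castSucc (t + ql)) =
              (∑ i : Fin (n+1), f i (t + ql)) - f (Fin.last n) (t + ql) := by
            rw [Fin.sum_univ_castSucc]; abel
          have h2 : (∑ i : Fin n, f i.castSucc t) =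
              (∑ i : Fin (n+1), f i t) - f (Fin.last n) t := by
            rw [Fin.sum_univ_castSucc]; abel
          rw [h1, h2, hper]
          have ht2 : t < ∑ i : Fin n, q i.castSucc := ht
          have e1 : (∑ i : Fin (n+1), f i (t + ql)) = 0 :=
            h0 _ (by omega)
          have e2 : (∑ i : Fin (n+1), f i t) = 0 :=
            h0 _ (by omega)
          rw [e1, e2]; abel)
      intro t
      have ht := this t
      rw [Finset.sum_sub_distrib] at ht
      have h1 : (∑ i : Fin n, f i.castSucc (t + ql)) =
          (∑ i : Fin (n+1), f i (t + ql)) - f (Fin.last n) (t + ql) := by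
        rw [Fin.sum_univ_castSucc]; abel
      have h2 : (∑ i : Fin n, f i.castSucc t) =
          (∑ i : Fin (n+1), f i t) - f (Fin.last n) t := by
        rw [Fin.sum_univ_castSucc]; abel
      rw [h1, h2, hper] at ht
      have : (∑ i : Fin (n+1), f i (t + ql)) - (∑ i : Fin (n+1), f i t) = 0 := by
        rw [← ht]; abel
      exact this
    -- strong induction on t
    intro t
    induction t using Nat.strong_induction_on with
    | _ t iht =>
      by_cases h : t < ∑ i, q i
      · exact h0 t h
      · push_neg at h
        have hql1 : 1 ≤ ql := hq _
        have hQl : ql ≤ ∑ i, q i := Finset.single_le_sum (fun i _ => Nat.zero_le _) (Finset.mem_univ _)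
        have ht' : t - ql + ql = t := by omega
        have := key (t - ql)
        rw [ht'] at this
        have h2 := iht (t - ql) (by omega)
        rw [h2] at this
        simpa using this

/-- If `f₁, …, f_m : ℕ → A` are periodic with periods `q₁, …, q_m` and their sum
vanishes at all `t < q₁ + ⋯ + q_m`, then the sum vanishes everywhere. -/
theorem stmt8 {A : Type*} [AddCommGroup A] (m : ℕ) (f : Fin m → ℕ → A)
    (q : Fin m → ℕ) (hq : ∀ i, 1 ≤ q i)
    (hper : ∀ i t, f i (t + q i) = f i t)
    (h0 : ∀ t < ∑ i, q i, (∑ i, f i t) = 0) :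
    ∀ t, (∑ i, f i t) = 0 :=
  aux8 m f q hq hper h0
end

section
/- Let G be a nilpotent group of class c. Then the commutator subgroup [G^{ω,n}, G^{ω,n}] is contained in ([G,G])^{ω, n^{2c}}, where for a group H and m ∈ ℕ, H^{ω,m} denotes the subgroup of H^ω generated by all functions ℕ → H that are periodic with period at most m. -/
open Subgroup hiding lowerCentralSeries lowerCentralSeries_zero lowerCentralSeries_antitone lowerCentralSeries_nilpotencyClass
open scoped commutatorElement

/-- The three subgroups lemma, relative to a normal subgroup. -/
theorem three_subgroups_le {G : Type*} [Group G] {A B C N : Subgroup G} [N.Normal]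
    (h1 : ⁅⁅B, C⁆, A⁆ ≤ N) (h2 : ⁅⁅C, A⁆, B⁆ ≤ N) : ⁅⁅A, B⁆, C⁆ ≤ N := by
  have key : ∀ X Y Z : Subgroup G, ⁅⁅X, Y⁆, Z⁆ ≤ N ↔
      ⁅⁅X.map (QuotientGroup.mk' N), Y.map (QuotientGroup.mk' N)⁆,
        Z.map (QuotientGroup.mk' N)⁆ = ⊥ := by
    intro X Y Z
    rw [← map_commutator, ← map_commutator, Subgroup.map_eq_bot_iff, QuotientGroup.ker_mk']
  rw [key]
  exact commutator_commutator_eq_bot_of_rotate ((key _ _ _).mp h1) ((key _ _ _).mp h2)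

theorem lcs_succ' {G : Type*} [Group G] (n : ℕ) :
    (⊤ : Subgroup G).lowerCentralSeries (n + 1) = ⁅(⊤ : Subgroup G).lowerCentralSeries n, (⊤ : Subgroup G)⁆ := rfl

/-- `⁅γ_i, γ_j⁆ ≤ γ_{i+j+1}` for the lower central series. -/
theorem lcs_commutator_le {G : Type*} [Group G] (i j : ℕ) :
    ⁅(⊤ : Subgroup G).lowerCentralSeries i, (⊤ : Subgroup G).lowerCentralSeries j⁆ ≤ (⊤ : Subgroup G).lowerCentralSeries (i + j + 1) := by
  induction j generalizing i with
  | zero =>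
    rw [Subgroup.lowerCentralSeries_zero]
    exact le_of_eq (lcs_succ' i).symm
  | succ j ih =>
    have e1 : ⁅(⊤ : Subgroup G).lowerCentralSeries i, (⊤ : Subgroup G).lowerCentralSeries (j + 1)⁆
        = ⁅⁅(⊤ : Subgroup G).lowerCentralSeries j, (⊤ : Subgroup G)⁆, (⊤ : Subgroup G).lowerCentralSeries i⁆ := by
      rw [commutator_comm, lcs_succ']
    rw [e1]
    refine three_subgroups_le ?_ ?_
    · have e2 : ⁅(⊤ : Subgroup G), (⊤ : Subgroup G).lowerCentralSeries i⁆ = (⊤ : Subgroup G).lowerCentralSeries (i + 1) := by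
        rw [commutator_comm, ← lcs_succ']
      rw [e2]
      have h := ih (i + 1)
      have e : i + 1 + j + 1 = i + (j + 1) + 1 := by omega
      rwa [e] at h
    · calc ⁅⁅(⊤ : Subgroup G).lowerCentralSeries i, (⊤ : Subgroup G).lowerCentralSeries j⁆, (⊤ : Subgroup G)⁆
          ≤ ⁅(⊤ : Subgroup G).lowerCentralSeries (i + j + 1), (⊤ : Subgroup G)⁆ :=
            commutator_mono (ih i) le_rfl
        _ = (⊤ : Subgroup G).lowerCentralSeries (i + (j + 1) + 1) := (lcs_succ' (i + j + 1)).symm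

/-- Auxiliary generating sets: functions with values in `γ_j` for some `j ≥ k`, periodic with
period at most `n ^ (j+1)`. -/
def auxSet (G : Type*) [Group G] (n k : ℕ) : Set (ℕ → G) :=
  {f | ∃ j, k ≤ j ∧ (∀ t, f t ∈ (⊤ : Subgroup G).lowerCentralSeries j) ∧
    ∃ d, 1 ≤ d ∧ d ≤ n ^ (j + 1) ∧ ∀ t, f (t + d) = f t}

theorem auxSet_mono {G : Type*} [Group G] (n : ℕ) {k l : ℕ} (h : k ≤ l) :
    auxSet G n l ⊆ auxSet G n k := by
  rintro f ⟨j, hj, hval, hper⟩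
  exact ⟨j, le_trans h hj, hval, hper⟩

theorem periodic_nat_mul {α : Type*} (f : ℕ → α) {d : ℕ} (hd : ∀ t, f (t + d) = f t)
    (m t : ℕ) : f (t + m * d) = f t := by
  induction m with
  | zero => simp
  | succ m ih =>
    have e : t + (m + 1) * d = (t + m * d) + d := by ring
    rw [e, hd, ih]

theorem aux_bracket {G : Type*} [Group G] (n k : ℕ) {b f : ℕ → G}
    (hb : b ∈ auxSet G n 0) (hf : f ∈ auxSet G n k) : ⁅b, f⁆ ∈ auxSet G n (k + 1) := by
  obtain ⟨j', -, hval', d', hd'1, hd'n, hper'⟩ := hb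
  obtain ⟨j, hjk, hval, d, hd1, hdn, hper⟩ := hf
  refine ⟨j' + j + 1, by omega, ?_, d' * d, Nat.mul_pos hd'1 hd1, ?_, ?_⟩
  · intro t
    have e : ⁅b, f⁆ t = ⁅b t, f t⁆ := rfl
    rw [e]
    exact lcs_commutator_le j' j (commutator_mem_commutator (hval' t) (hval t))
  · calc d' * d ≤ n ^ (j' + 1) * n ^ (j + 1) := Nat.mul_le_mul hd'n hdn
      _ = n ^ (j' + j + 1 + 1) := by rw [← pow_add]; ring_nf
  · intro t
    have hb2 : b (t + d' * d) = b t := by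
      have e : t + d' * d = t + d * d' := by ring
      rw [e]
      exact periodic_nat_mul b hper' d t
    have hf2 : f (t + d' * d) = f t := periodic_nat_mul f hper d' t
    show ⁅b (t + d' * d), f (t + d' * d)⁆ = ⁅b t, f t⁆
    rw [hb2, hf2]

theorem aux_key {G : Type*} [Group G] (n c : ℕ) (hbot : (⊤ : Subgroup G).lowerCentralSeries c = ⊥) :
    ∀ i k, c ≤ k + i →
      ∀ b ∈ closure (auxSet G n 0), ∀ t ∈ closure (auxSet G n k),
        ⁅b, t⁆ ∈ closure (auxSet G n (k + 1)) := by
  intro i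
  induction i with
  | zero =>
    intro k hk b hb t ht
    have hT : closure (auxSet G n k) ≤ ⊥ := by
      rw [closure_le]
      rintro f ⟨j, hj, hval, -⟩
      have hfe : f = 1 := funext fun s => by
        have hle : (⊤ : Subgroup G).lowerCentralSeries j ≤ ⊥ :=
          hbot ▸ Subgroup.lowerCentralSeries_antitone ⊤ (by omega)
        simpa [Subgroup.mem_bot] using hle (hval s)
      simp [hfe, Subgroup.mem_bot]
    have ht1 : t = 1 := by simpa [Subgroup.mem_bot] using hT ht
    simp only [ht1, commutatorElement_one_right]
    exact one_mem _
  | succ i IH =>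
    intro k hk b hb t ht
    have IH' := IH (k + 1) (by omega)
    have mono1 : closure (auxSet G n (k + 2)) ≤ closure (auxSet G n (k + 1)) :=
      closure_mono (auxSet_mono n (by omega))
    have mono0 : closure (auxSet G n k) ≤ closure (auxSet G n 0) :=
      closure_mono (auxSet_mono n (Nat.zero_le k))
    have Igen : ∀ b' ∈ closure (auxSet G n 0), ∀ f ∈ auxSet G n k,
        ⁅b', f⁆ ∈ closure (auxSet G n (k + 1)) := by
      intro b' hb'
      refine closure_induction (fun x hx f hf => ?_) (fun f hf => ?_)
        (fun x y hx hy px py f hf => ?_) (fun x hx px f hf => ?_) hb'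
      · exact subset_closure (aux_bracket n k hx hf)
      · have e : ⁅(1 : ℕ → G), f⁆ = 1 := by group
        rw [e]; exact one_mem _
      · have h1 := px f hf
        have h2 := py f hf
        have h3 : ⁅x, ⁅y, f⁆⁆ ∈ closure (auxSet G n (k + 2)) := IH' x hx ⁅y, f⁆ h2
        have e : ⁅x * y, f⁆ = ⁅x, ⁅y, f⁆⁆ * ⁅y, f⁆ * ⁅x, f⁆ := by group
        rw [e]
        exact mul_mem (mul_mem (mono1 h3) h2) h1
      · have h1 := px f hf
        have h3 : ⁅x⁻¹, ⁅x, f⁆⁻¹⁆ ∈ closure (auxSet G n (k + 2)) :=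
          IH' x⁻¹ (inv_mem hx) _ (inv_mem h1)
        have e : ⁅x⁻¹, f⁆ = ⁅x⁻¹, ⁅x, f⁆⁻¹⁆ * ⁅x, f⁆⁻¹ := by group
        rw [e]
        exact mul_mem (mono1 h3) (inv_mem h1)
    refine closure_induction (fun f hf => Igen b hb f hf) ?_
      (fun x y hx hy px py => ?_) (fun x hx px => ?_) ht
    · have e : ⁅b, (1 : ℕ → G)⁆ = 1 := by group
      rw [e]; exact one_mem _
    · have h3 : ⁅x, ⁅b, y⁆⁆ ∈ closure (auxSet G n (k + 2)) :=
        IH' x (mono0 hx) ⁅b, y⁆ py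
      have e : ⁅b, x * y⁆ = ⁅b, x⁆ * ⁅x, ⁅b, y⁆⁆ * ⁅b, y⁆ := by group
      rw [e]
      exact mul_mem (mul_mem px (mono1 h3)) py
    · have h3 : ⁅x⁻¹, ⁅b, x⁆⁻¹⁆ ∈ closure (auxSet G n (k + 2)) :=
        IH' x⁻¹ (inv_mem (mono0 hx)) _ (inv_mem px)
      have e : ⁅b, x⁻¹⁆ = ⁅x⁻¹, ⁅b, x⁆⁻¹⁆ * ⁅b, x⁆⁻¹ := by group
      rw [e]
      exact mul_mem (mono1 h3) (inv_mem px)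

/-- The subgroup of `G^ω = (ℕ → G)` (with pointwise multiplication) generated by
the functions that are periodic with period at most `m`. -/
def periodicSubgroup (G : Type*) [Group G] (m : ℕ) : Subgroup (ℕ → G) :=
  Subgroup.closure {f : ℕ → G | ∃ d, 1 ≤ d ∧ d ≤ m ∧ ∀ t, f (t + d) = f t}

/-- For a nilpotent group `G` of class `c`, the commutator subgroup
`[G^{ω,n}, G^{ω,n}]` is contained in `([G,G])^{ω,n^{2c}}`, the subgroup of `G^ω`
generated by functions into `[G,G]` that are periodic with period at most `n^{2c}`. -/
theorem stmt9 {G : Type*} [Group G] [Group.IsNilpotent G] (c n : ℕ)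
    (hc : Group.nilpotencyClass G = c) :
    ⁅periodicSubgroup G n, periodicSubgroup G n⁆ ≤
      Subgroup.closure {f : ℕ → G |
        (∀ t, f t ∈ commutator G) ∧
        ∃ d, 1 ≤ d ∧ d ≤ n ^ (2 * c) ∧ ∀ t, f (t + d) = f t} := by
  have hbot : (⊤ : Subgroup G).lowerCentralSeries c = ⊥ := by
    rw [← hc]; exact Subgroup.lowerCentralSeries_nilpotencyClass
  rw [Subgroup.commutator_le]
  intro a ha b hb
  have hP : periodicSubgroup G n ≤ closure (auxSet G n 0) := by
    unfold periodicSubgroup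
    apply Subgroup.closure_mono
    rintro f ⟨d, hd1, hdn, hper⟩
    exact ⟨0, le_rfl, fun t => mem_top _, d, hd1, by rwa [pow_one], hper⟩
  have hab : ⁅a, b⁆ ∈ closure (auxSet G n (0 + 1)) :=
    aux_key n c hbot c 0 (by omega) a (hP ha) b (hP hb)
  have hfinal : closure (auxSet G n (0 + 1)) ≤
      Subgroup.closure {f : ℕ → G |
        (∀ t, f t ∈ commutator G) ∧
        ∃ d, 1 ≤ d ∧ d ≤ n ^ (2 * c) ∧ ∀ t, f (t + d) = f t} := by
    rw [closure_le]
    rintro f ⟨j, hj1, hval, d, hd1, hdn, hper⟩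
    by_cases hcase : j + 1 ≤ 2 * c
    · apply Subgroup.subset_closure
      refine ⟨fun t => ?_, d, hd1, ?_, hper⟩
      · have hle : (⊤ : Subgroup G).lowerCentralSeries j ≤ (⊤ : Subgroup G).lowerCentralSeries 1 :=
          Subgroup.lowerCentralSeries_antitone ⊤ hj1
        rw [Subgroup.top_lowerCentralSeries_one] at hle
        exact hle (hval t)
      · have hn : 1 ≤ n := by
          by_contra h
          have hn0 : n = 0 := by omega
          rw [hn0, Nat.zero_pow (by omega)] at hdn
          omega
        calc d ≤ n ^ (j + 1) := hdn
          _ ≤ n ^ (2 * c) := Nat.pow_le_pow_right hn hcase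
    · have hfe : f = 1 := funext fun s => by
        have hle : (⊤ : Subgroup G).lowerCentralSeries j ≤ ⊥ :=
          hbot ▸ Subgroup.lowerCentralSeries_antitone ⊤ (by omega)
        simpa [Subgroup.mem_bot] using hle (hval s)
      rw [hfe]
      exact one_mem _
  exact hfinal hab
end

section
/- In any group F generated by a set Γ, the commutator subgroup [F, F] is generated by the set of all left-normed commutators [g₁, g₂, …, g_k] := [[…[[g₁,g₂],g₃],…], g_k] with k ≥ 2 and g₁, …, g_k ∈ Γ ∪ Γ⁻¹. -/
open scoped commutatorElement

/-- In a group `F` generated by `Γ`, the commutator subgroup `[F,F]` is generated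
by the left-normed commutators `[g₁, …, g_k]` with `k ≥ 2` and
`g₁, …, g_k ∈ Γ ∪ Γ⁻¹`. -/
theorem stmt10 {F : Type*} [Group F] (Γ : Set F)
    (hgen : Subgroup.closure Γ = ⊤) :
    commutator F = Subgroup.closure
      {x : F | ∃ g₀ : F, ∃ l : List F,
        g₀ ∈ Γ ∪ Γ⁻¹ ∧ l ≠ [] ∧ (∀ g ∈ l, g ∈ Γ ∪ Γ⁻¹) ∧
        x = l.foldl (fun p r => ⁅p, r⁆) g₀} := by
  set S : Set F := {x : F | ∃ g₀ : F, ∃ l : List F,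
        g₀ ∈ Γ ∪ Γ⁻¹ ∧ l ≠ [] ∧ (∀ g ∈ l, g ∈ Γ ∪ Γ⁻¹) ∧
        x = l.foldl (fun p r => ⁅p, r⁆) g₀} with hS
  set H := Subgroup.closure S with hH
  -- Γ ∪ Γ⁻¹ is closed under inverse
  have hsymm : ∀ g ∈ Γ ∪ Γ⁻¹, g⁻¹ ∈ Γ ∪ Γ⁻¹ := by
    intro g hg
    rcases hg with h | h
    · exact Or.inr (by simpa using h)
    · exact Or.inl (by simpa using h)
  -- conjugation by g ∈ Γ ∪ Γ⁻¹ preserves H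
  have hconj : ∀ g ∈ Γ ∪ Γ⁻¹, ∀ x ∈ H, g * x * g⁻¹ ∈ H := by
    intro g hg x hx
    refine Subgroup.closure_induction ?_ ?_ ?_ ?_ hx
    · intro s hs
      obtain ⟨g₀, l, hg₀, hl, hmem, rfl⟩ := hs
      set c := l.foldl (fun p r => ⁅p, r⁆) g₀ with hc
      have h1 : ⁅c, g⁆ ∈ S := by
        refine ⟨g₀, l ++ [g], hg₀, by simp, ?_, ?_⟩
        · intro a ha
          rcases List.mem_append.mp ha with h | h
          · exact hmem a h
          · rw [List.mem_singleton.mp h]; exact hg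
        · simp [List.foldl_append, hc]
      have h0 : c ∈ S := ⟨g₀, l, hg₀, hl, hmem, rfl⟩
      have key : g * c * g⁻¹ = ⁅c, g⁆⁻¹ * c := by
        simp only [commutatorElement_def]; group
      rw [key]
      exact mul_mem (inv_mem (Subgroup.subset_closure h1)) (Subgroup.subset_closure h0)
    · simpa using one_mem H
    · intro a b _ _ ha hb
      have : g * (a * b) * g⁻¹ = (g * a * g⁻¹) * (g * b * g⁻¹) := by group
      rw [this]; exact mul_mem ha hb
    · intro a _ ha
      have : g * a⁻¹ * g⁻¹ = (g * a * g⁻¹)⁻¹ := by group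
      rw [this]; exact inv_mem ha
  -- H is normal
  have hnorm : H.Normal := by
    apply Subgroup.normalizer_eq_top_iff.mp
    rw [eq_top_iff, ← hgen, Subgroup.closure_le]
    intro g hg
    rw [SetLike.mem_coe, Subgroup.mem_normalizer_iff]
    intro x
    constructor
    · exact fun hx => hconj g (Or.inl hg) x hx
    · intro hx
      have := hconj g⁻¹ (hsymm g (Or.inl hg)) _ hx
      simpa [mul_assoc] using this
  -- quotient map
  letI := hnorm
  set π : F →* F ⧸ H := QuotientGroup.mk' H with hπ
  have hker : ∀ x : F, π x = 1 ↔ x ∈ H := fun x => QuotientGroup.eq_one_iff x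
  have hcommgen : ∀ a ∈ Γ ∪ Γ⁻¹, ∀ b ∈ Γ ∪ Γ⁻¹, Commute (π a) (π b) := by
    intro a ha b hb
    rw [← commutatorElement_eq_one_iff_commute]
    have : ⁅a, b⁆ ∈ S := ⟨a, [b], ha, by simp, by simpa using hb, by simp⟩
    have h1 : π ⁅a, b⁆ = 1 := (hker _).mpr (Subgroup.subset_closure this)
    simpa [commutatorElement_def, map_mul, map_inv] using h1
  have hcommall : ∀ x y : F, Commute (π x) (π y) := by
    have hx' : ∀ x : F, x ∈ Subgroup.closure Γ := by intro x; rw [hgen]; trivial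
    intro x y
    refine Subgroup.closure_induction ?_ ?_ ?_ ?_ (hx' x)
    · intro a ha
      refine Subgroup.closure_induction ?_ ?_ ?_ ?_ (hx' y)
      · intro b hb; exact hcommgen a (Or.inl ha) b (Or.inl hb)
      · simp [Commute.one_right]
      · intro c d _ _ h1 h2; simpa [map_mul] using h1.mul_right h2
      · intro c _ h1; simpa [map_inv] using h1.inv_right
    · simp [Commute.one_left]
    · intro c d _ _ h1 h2; simpa [map_mul] using h1.mul_left h2
    · intro c _ h1; simpa [map_inv] using h1.inv_left
  apply le_antisymm
  · rw [commutator_def]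
    rw [Subgroup.commutator_le]
    intro x _ y _
    rw [← hker]
    have := (hcommall x y)
    rw [← commutatorElement_eq_one_iff_commute] at this
    simpa [commutatorElement_def, map_mul, map_inv] using this
  · rw [Subgroup.closure_le]
    intro x hx
    obtain ⟨g₀, l, hg₀, hl, hmem, rfl⟩ := hx
    obtain ⟨L, b, rfl⟩ := (List.eq_nil_or_concat l).resolve_left hl
    rw [List.concat_eq_append, List.foldl_append]
    simp only [List.foldl_cons, List.foldl_nil]
    rw [commutator_def]
    exact Subgroup.commutator_mem_commutator (Subgroup.mem_top _) (Subgroup.mem_top _)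
end

section
/- Let H be a torsion-free group. Two rays (finite sequences of the form (a b^i)_{0 ≤ i ≤ k} with b ≠ 1) over H whose periods b are not commensurable have supports intersecting in at most one element. -/
/-- In a torsion-free group, two rays whose periods are not commensurable have
supports intersecting in at most one element. -/
theorem stmt13 {H : Type*} [Group H]
    (htf : ∀ x : H, x ≠ 1 → ∀ n : ℤ, n ≠ 0 → x ^ n ≠ 1)
    (a b g h : H) (hb : b ≠ 1) (hh : h ≠ 1) (k l : ℕ)
    (hnc : ¬ ∃ x y : ℤ, x ≠ 0 ∧ y ≠ 0 ∧ b ^ x = h ^ y) :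
    Set.Subsingleton
      ({z : H | ∃ i : ℕ, i ≤ k ∧ z = a * b ^ i} ∩
       {z : H | ∃ j : ℕ, j ≤ l ∧ z = g * h ^ j}) := by
  rintro z1 ⟨⟨i1, _, rfl⟩, ⟨j1, _, hz1⟩⟩ z2 ⟨⟨i2, _, rfl⟩, ⟨j2, _, hz2⟩⟩
  have key : b ^ ((i2 : ℤ) - i1) = h ^ ((j2 : ℤ) - j1) := by
    have : (a * b ^ i1)⁻¹ * (a * b ^ i2) = (g * h ^ j1)⁻¹ * (g * h ^ j2) := by
      rw [← hz1, ← hz2]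
    have hb' : (a * b ^ i1)⁻¹ * (a * b ^ i2) = b ^ ((i2 : ℤ) - i1) := by
      rw [sub_eq_add_neg, zpow_add, zpow_natCast, zpow_neg, zpow_natCast]
      group
    have hh' : (g * h ^ j1)⁻¹ * (g * h ^ j2) = h ^ ((j2 : ℤ) - j1) := by
      rw [sub_eq_add_neg, zpow_add, zpow_natCast, zpow_neg, zpow_natCast]
      group
    rw [← hb', ← hh', this]
  have hi : (i1 : ℤ) = i2 := by
    by_contra hne
    have hx : (i2 : ℤ) - i1 ≠ 0 := by omega
    have hy : (j2 : ℤ) - j1 ≠ 0 := by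
      intro h0
      rw [h0, zpow_zero] at key
      exact htf b hb _ hx key
    exact hnc ⟨_, _, hx, hy, key⟩
  have : i1 = i2 := by exact_mod_cast hi
  rw [this]
end

section
/- Let H be a torsion-free group and let p = (a b^i)_{0 ≤ i ≤ m} and q = (g h^j)_{0 ≤ j ≤ ℓ} be rays with b = h^d for some nonzero integer d. Then the set {i ∈ ℤ : a b^i ∈ supp(q)} is an interval of ℤ (i.e., if i₁ ≤ i ≤ i₂ and a b^{i₁}, a b^{i₂} ∈ supp(q) then a b^i ∈ supp(q)). -/
/-- Let `p = (a b^i)_{0 ≤ i ≤ m}` and `q = (g h^j)_{0 ≤ j ≤ ℓ}` be rays over a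
torsion-free group with `b = h^d` for some nonzero `d`. Then
`{i ∈ ℤ : a b^i ∈ supp(q)}` is an interval of `ℤ`. -/
theorem stmt14 {H : Type*} [Group H]
    (htf : ∀ x : H, x ≠ 1 → ∀ n : ℤ, n ≠ 0 → x ^ n ≠ 1)
    (a b g h : H) (hh : h ≠ 1) (d : ℤ) (hd : d ≠ 0) (hbh : b = h ^ d)
    (m l : ℕ) :
    ∀ i₁ i i₂ : ℤ, i₁ ≤ i → i ≤ i₂ →
      a * b ^ i₁ ∈ {z : H | ∃ j : ℕ, j ≤ l ∧ z = g * h ^ j} →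
      a * b ^ i₂ ∈ {z : H | ∃ j : ℕ, j ≤ l ∧ z = g * h ^ j} →
      a * b ^ i ∈ {z : H | ∃ j : ℕ, j ≤ l ∧ z = g * h ^ j} := by
  have key : ∀ x y : ℤ, h ^ x = h ^ y → x = y := by
    intro x y hxy
    by_contra hne
    exact htf h hh (x - y) (sub_ne_zero.mpr hne)
      (by rw [zpow_sub, hxy, mul_inv_cancel])
  rintro i₁ i i₂ hle₁ hle₂ ⟨j₁, hj₁, he₁⟩ ⟨j₂, hj₂, he₂⟩
  have conv : ∀ (i' : ℤ) (j' : ℕ), a * b ^ i' = g * h ^ j' →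
      g⁻¹ * a = h ^ ((j' : ℤ) - d * i') := by
    intro i' j' he
    have h' : a * h ^ (d * i') = g * h ^ ((j' : ℤ)) := by
      rw [zpow_natCast, zpow_mul, ← hbh]; exact he
    calc g⁻¹ * a = g⁻¹ * ((a * h ^ (d * i')) * (h ^ (d * i'))⁻¹) := by group
      _ = g⁻¹ * (g * h ^ ((j' : ℤ)) * (h ^ (d * i'))⁻¹) := by rw [h']
      _ = h ^ ((j' : ℤ) - d * i') := by rw [zpow_sub]; group
  have e1 := conv i₁ j₁ he₁
  have e2 := conv i₂ j₂ he₂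
  set c : ℤ := (j₁ : ℤ) - d * i₁ with hc
  have hcc : (j₂ : ℤ) - d * i₂ = c := key _ _ (e2.symm.trans e1)
  -- bounds on J = c + d * i
  have hJb : (0 : ℤ) ≤ c + d * i ∧ c + d * i ≤ l := by
    have h1 : c + d * i₁ = (j₁ : ℤ) := by omega
    have h2 : c + d * i₂ = (j₂ : ℤ) := by omega
    rcases lt_or_gt_of_ne hd with hdneg | hdpos
    · have hm1 : d * i ≤ d * i₁ := mul_le_mul_of_nonpos_left hle₁ hdneg.le
      have hm2 : d * i₂ ≤ d * i := mul_le_mul_of_nonpos_left hle₂ hdneg.le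
      omega
    · have hm1 : d * i₁ ≤ d * i := mul_le_mul_of_nonneg_left hle₁ hdpos.le
      have hm2 : d * i ≤ d * i₂ := mul_le_mul_of_nonneg_left hle₂ hdpos.le
      omega
  refine ⟨(c + d * i).toNat, by omega, ?_⟩
  have hga : a = g * h ^ c := by
    rw [← e1]; group
  have : ((c + d * i).toNat : ℤ) = c + d * i := Int.toNat_of_nonneg hJb.1
  calc a * b ^ i = g * h ^ c * h ^ (d * i) := by
        rw [hbh, ← zpow_mul, hga]
    _ = g * h ^ (c + d * i) := by rw [zpow_add, mul_assoc]
    _ = g * h ^ (c + d * i).toNat := by rw [← zpow_natCast h, this]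
end

section
/- Let H be a torsion-free group, p = (a b^i)_{0 ≤ i ≤ m} and q = (g h^j)_{0 ≤ j ≤ ℓ} rays with b = h^d, d ∈ ℤ \ {0}. Then p is packed into q (i.e., supp(p) = supp(q) ∩ a⟨b⟩) if and only if a ∈ supp(q), a b^m ∈ supp(q), a b^{−1} ∈ {g h^j : j ∈ ℤ \ [0, ℓ]}, and a b^{m+1} ∈ {g h^j : j ∈ ℤ \ [0, ℓ]}. -/
/-- Characterization of packing: a ray `p = (a b^i)_{0 ≤ i ≤ m}` with `b = h^d`
(`d ≠ 0`) is packed into the ray `q = (g h^j)_{0 ≤ j ≤ ℓ}`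
(i.e. `supp(p) = supp(q) ∩ a⟨b⟩`) if and only if `a, a b^m ∈ supp(q)` and
`a b^{-1}, a b^{m+1} ∈ {g h^j : j ∈ ℤ \ [0,ℓ]}`. -/
theorem stmt15 {H : Type*} [Group H]
    (htf : ∀ x : H, x ≠ 1 → ∀ n : ℤ, n ≠ 0 → x ^ n ≠ 1)
    (a b g h : H) (hh : h ≠ 1) (d : ℤ) (hd : d ≠ 0) (hbh : b = h ^ d)
    (m l : ℕ) :
    ({z : H | ∃ i : ℕ, i ≤ m ∧ z = a * b ^ i} =
      {z : H | ∃ j : ℕ, j ≤ l ∧ z = g * h ^ j} ∩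
      {z : H | ∃ i : ℤ, z = a * b ^ i}) ↔
    ((∃ j : ℕ, j ≤ l ∧ a = g * h ^ j) ∧
     (∃ j : ℕ, j ≤ l ∧ a * b ^ m = g * h ^ j) ∧
     (∃ j : ℤ, (j < 0 ∨ (l : ℤ) < j) ∧ a * b ^ (-1 : ℤ) = g * h ^ j) ∧
     (∃ j : ℤ, (j < 0 ∨ (l : ℤ) < j) ∧ a * b ^ ((m : ℤ) + 1) = g * h ^ j)) := by
  have hpow : ∀ x y : ℤ, h ^ x = h ^ y → x = y := by
    intro x y hxy
    by_contra hne
    exact htf h hh (x - y) (sub_ne_zero.mpr hne)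
      (by rw [zpow_sub, hxy]; simp)
  have hbz : ∀ i : ℤ, b ^ i = h ^ (d * i) := by
    intro i; rw [hbh, ← zpow_mul]
  have hbn : ∀ i : ℕ, b ^ i = h ^ (d * (i : ℤ)) := by
    intro i; rw [← zpow_natCast b i, hbz]
  constructor
  · intro heq
    have ha : a ∈ ({z : H | ∃ j : ℕ, j ≤ l ∧ z = g * h ^ j} ∩
        {z : H | ∃ i : ℤ, z = a * b ^ i}) := by
      rw [← heq]; exact ⟨0, Nat.zero_le _, by simp⟩
    obtain ⟨hq, _⟩ := ha
    obtain ⟨j0, hj0, haj0⟩ := hq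
    have ham : a * b ^ m ∈ ({z : H | ∃ j : ℕ, j ≤ l ∧ z = g * h ^ j} ∩
        {z : H | ∃ i : ℤ, z = a * b ^ i}) := by
      rw [← heq]; exact ⟨m, le_refl _, rfl⟩
    -- a ∈ g⟨h⟩ as a ℤ-power
    have haz : a = g * h ^ (j0 : ℤ) := by rw [haj0, zpow_natCast]
    have hval : ∀ i : ℤ, a * b ^ i = g * h ^ ((j0 : ℤ) + d * i) := by
      intro i
      rw [haz, hbz, mul_assoc, ← zpow_add]
    have hnot : ∀ i : ℤ, (i < 0 ∨ (m : ℤ) < i) → ∀ j : ℕ, j ≤ l →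
        a * b ^ i ≠ g * h ^ j := by
      intro i hi j hj hcon
      have hmem : a * b ^ i ∈ {z : H | ∃ i : ℕ, i ≤ m ∧ z = a * b ^ i} := by
        rw [heq]; exact ⟨⟨j, hj, hcon⟩, ⟨i, rfl⟩⟩
      obtain ⟨i', hi', hii'⟩ := hmem
      have h1 : b ^ i = b ^ i' := mul_left_cancel hii'
      rw [hbz, hbn] at h1
      have h2 := hpow _ _ h1
      have h3 : i = (i' : ℤ) := by
        rcases mul_left_cancel₀ hd h2 with h; exact h
      omega
    refine ⟨⟨j0, hj0, haj0⟩, ham.1, ?_, ?_⟩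
    · refine ⟨(j0 : ℤ) - d, ?_, by rw [hval]; ring_nf⟩
      by_contra hcon
      push_neg at hcon
      obtain ⟨h1, h2⟩ := hcon
      refine hnot (-1) (Or.inl (by norm_num)) ((j0 : ℤ) - d).toNat (by omega) ?_
      rw [hval, ← zpow_natCast h, Int.toNat_of_nonneg (by omega)]
      ring_nf
    · refine ⟨(j0 : ℤ) + d * ((m : ℤ) + 1), ?_, by rw [hval]⟩
      by_contra hcon
      push_neg at hcon
      obtain ⟨h1, h2⟩ := hcon
      refine hnot ((m : ℤ) + 1) (Or.inr (by omega)) ((j0 : ℤ) + d * ((m : ℤ) + 1)).toNat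
        (by omega) ?_
      rw [hval, ← zpow_natCast h, Int.toNat_of_nonneg (by omega)]
  · rintro ⟨⟨j0, hj0, ha0⟩, ⟨j1, hj1, ha1⟩, ⟨e0, he0, hb0⟩, ⟨e1, he1, hb1⟩⟩
    have haz : a = g * h ^ (j0 : ℤ) := by rw [ha0, zpow_natCast]
    have hval : ∀ i : ℤ, a * b ^ i = g * h ^ ((j0 : ℤ) + d * i) := by
      intro i
      rw [haz, hbz, mul_assoc, ← zpow_add]
    have hj1z : (j1 : ℤ) = (j0 : ℤ) + d * m := by
      have : a * b ^ ((m : ℕ) : ℤ) = g * h ^ (j1 : ℤ) := by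
        rw [zpow_natCast b, ha1, zpow_natCast]
      rw [hval] at this
      exact (hpow _ _ (mul_left_cancel this)).symm
    have he0z : e0 = (j0 : ℤ) - d := by
      rw [hval] at hb0
      have := hpow _ _ (mul_left_cancel hb0)
      omega
    have he1z : e1 = (j0 : ℤ) + d * ((m : ℤ) + 1) := by
      rw [hval] at hb1
      exact (hpow _ _ (mul_left_cancel hb1)).symm
    ext z
    simp only [Set.mem_setOf_eq, Set.mem_inter_iff]
    constructor
    · rintro ⟨i, him, rfl⟩
      have hvi : a * b ^ i = g * h ^ ((j0 : ℤ) + d * i) := by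
        rw [← zpow_natCast b i, hval]
      have hbound : 0 ≤ (j0 : ℤ) + d * i ∧ (j0 : ℤ) + d * i ≤ l := by
        have himz : (i : ℤ) ≤ (m : ℤ) := by exact_mod_cast him
        have hiz : (0 : ℤ) ≤ i := Int.natCast_nonneg i
        rcases hd.lt_or_gt with hdneg | hdpos
        · have h1 : d * m ≤ d * i := by nlinarith
          have h2 : d * i ≤ 0 := by nlinarith
          omega
        · have h1 : 0 ≤ d * i := by positivity
          have h2 : d * i ≤ d * m := by nlinarith
          omega
      refine ⟨⟨((j0 : ℤ) + d * i).toNat, by omega, ?_⟩, ⟨(i : ℤ), by rw [zpow_natCast]⟩⟩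
      rw [hvi, ← zpow_natCast h, Int.toNat_of_nonneg hbound.1]
    · rintro ⟨⟨j, hj, hzq⟩, ⟨i, rfl⟩⟩
      have hji : (j : ℤ) = (j0 : ℤ) + d * i := by
        rw [hval, ← zpow_natCast h j] at hzq
        exact (hpow _ _ (mul_left_cancel hzq)).symm
      have hir : 0 ≤ i ∧ i ≤ (m : ℤ) := by
        have hjz : (0 : ℤ) ≤ j := Int.natCast_nonneg j
        have hjl : (j : ℤ) ≤ l := by exact_mod_cast hj
        have hj0z : (0 : ℤ) ≤ j0 := Int.natCast_nonneg j0
        have hj0l : (j0 : ℤ) ≤ l := by exact_mod_cast hj0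
        have hj1a : (0 : ℤ) ≤ j1 := Int.natCast_nonneg j1
        have hj1b : (j1 : ℤ) ≤ l := by exact_mod_cast hj1
        rcases hd.lt_or_gt with hdneg | hdpos
        · constructor
          · by_contra hc
            push_neg at hc
            have h1 : d * (-1) ≤ d * i := by nlinarith
            rcases he0 with h | h <;> omega
          · by_contra hc
            push_neg at hc
            have h1 : d * i ≤ d * ((m : ℤ) + 1) := by nlinarith
            have h2 : d * ((m : ℤ) + 1) = d * m + d := by ring
            rcases he1 with h | h <;> omega
        · constructor
          · by_contra hc
            push_neg at hc
            have h1 : d * i ≤ d * (-1) := by nlinarith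
            rcases he0 with h | h <;> omega
          · by_contra hc
            push_neg at hc
            have h1 : d * ((m : ℤ) + 1) ≤ d * i := by nlinarith
            have h2 : d * ((m : ℤ) + 1) = d * m + d := by ring
            rcases he1 with h | h <;> omega
      refine ⟨i.toNat, by omega, ?_⟩
      rw [← zpow_natCast b, Int.toNat_of_nonneg hir.1]
end

section
/- Let H be a torsion-free group and let p = (a b^i)_{0 ≤ i ≤ m} be a ray packed into the ray q = (g h^j)_{0 ≤ j ≤ ℓ}, where b = h^d with d ≠ 0. Then there exists a unique remainder 0 ≤ t < |d| such that supp(p) = {g h^j : 0 ≤ j ≤ ℓ, j ≡ t (mod d)}. -/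
/-- If the ray `p = (a b^i)_{0 ≤ i ≤ m}` with `b = h^d` (`d ≠ 0`) is packed into
the ray `q = (g h^j)_{0 ≤ j ≤ ℓ}`, then there is a unique remainder
`0 ≤ t < |d|` with `supp(p) = {g h^j : 0 ≤ j ≤ ℓ, j ≡ t (mod d)}`. -/
theorem stmt16 {H : Type*} [Group H]
    (htf : ∀ x : H, x ≠ 1 → ∀ n : ℤ, n ≠ 0 → x ^ n ≠ 1)
    (a b g h : H) (hh : h ≠ 1) (d : ℤ) (hd : d ≠ 0) (hbh : b = h ^ d)
    (m l : ℕ)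
    (hpacked : {z : H | ∃ i : ℕ, i ≤ m ∧ z = a * b ^ i} =
      {z : H | ∃ j : ℕ, j ≤ l ∧ z = g * h ^ j} ∩
      {z : H | ∃ i : ℤ, z = a * b ^ i}) :
    ∃! t : ℤ, 0 ≤ t ∧ t < |d| ∧
      {z : H | ∃ i : ℕ, i ≤ m ∧ z = a * b ^ i} =
        {z : H | ∃ j : ℕ, j ≤ l ∧ (j : ℤ) ≡ t [ZMOD d] ∧ z = g * h ^ j} := by
  have hinj : ∀ s u : ℤ, h ^ s = h ^ u → s = u := by
    intro s u hsu
    by_contra hne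
    exact htf h hh (s - u) (sub_ne_zero.mpr hne)
      (by rw [zpow_sub, hsu, mul_inv_cancel])
  -- a is in q's support
  have haS : a ∈ {z : H | ∃ i : ℕ, i ≤ m ∧ z = a * b ^ i} :=
    ⟨0, Nat.zero_le _, by simp⟩
  have haq : a ∈ {z : H | ∃ j : ℕ, j ≤ l ∧ z = g * h ^ j} := by
    have := haS
    rw [hpacked] at this
    exact this.1
  obtain ⟨j0, hj0l, haj0⟩ := haq
  have key : ∀ k : ℤ, a * b ^ k = g * h ^ ((j0 : ℤ) + d * k) := by
    intro k
    rw [haj0, hbh, ← zpow_natCast h j0, mul_assoc, ← zpow_mul, ← zpow_add]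
  have habs : 0 < |d| := abs_pos.mpr hd
  set t : ℤ := (j0 : ℤ) % |d| with ht
  have ht0 : 0 ≤ t := Int.emod_nonneg _ (ne_of_gt habs)
  have htlt : t < |d| := Int.emod_lt_of_pos _ habs
  have hdvdabs : d ∣ |d| := (dvd_abs d d).mpr dvd_rfl
  have hj0t : d ∣ (j0 : ℤ) - t := by
    refine dvd_trans hdvdabs ?_
    have : (j0 : ℤ) - t = |d| * ((j0 : ℤ) / |d|) := by
      rw [ht, Int.emod_def]; ring
    rw [this]
    exact Dvd.intro _ rfl
  have hseteq : {z : H | ∃ i : ℕ, i ≤ m ∧ z = a * b ^ i} =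
      {z : H | ∃ j : ℕ, j ≤ l ∧ (j : ℤ) ≡ t [ZMOD d] ∧ z = g * h ^ j} := by
    ext z
    constructor
    · rintro ⟨i, him, rfl⟩
      have hz : a * b ^ i ∈ {z : H | ∃ j : ℕ, j ≤ l ∧ z = g * h ^ j} ∩
          {z : H | ∃ i : ℤ, z = a * b ^ i} := by
        rw [← hpacked]; exact ⟨i, him, rfl⟩
      obtain ⟨j, hjl, hzj⟩ := hz.1
      have heq : a * b ^ (i : ℤ) = g * h ^ ((j0 : ℤ) + d * i) := key i
      rw [zpow_natCast] at heq
      have : g * h ^ ((j : ℤ)) = g * h ^ ((j0 : ℤ) + d * i) := by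
        rw [zpow_natCast, ← hzj, heq]
      have hji : (j : ℤ) = (j0 : ℤ) + d * i := hinj _ _ (mul_left_cancel this)
      refine ⟨j, hjl, ?_, hzj⟩
      rw [Int.modEq_iff_dvd]
      have : t - (j : ℤ) = (t - (j0 : ℤ)) - d * i := by rw [hji]; ring
      rw [this]
      have hj0t' : d ∣ t - (j0 : ℤ) := by
        rw [← neg_sub]; exact dvd_neg.mpr hj0t
      exact dvd_sub hj0t' ⟨i, rfl⟩
    · rintro ⟨j, hjl, hjt, rfl⟩
      have hjj0 : d ∣ (j : ℤ) - (j0 : ℤ) := by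
        have h1 : d ∣ t - (j : ℤ) := (Int.modEq_iff_dvd).mp hjt
        have : (j : ℤ) - (j0 : ℤ) = -(t - (j : ℤ)) - ((j0 : ℤ) - t) := by ring
        rw [this]
        exact dvd_sub (dvd_neg.mpr h1) hj0t
      obtain ⟨k, hk⟩ := hjj0
      have hexp : (j0 : ℤ) + d * k = (j : ℤ) := by linarith [hk]
      have : g * h ^ j = a * b ^ k := by
        rw [key k, hexp, zpow_natCast]
      rw [hpacked]
      exact ⟨⟨j, hjl, rfl⟩, ⟨k, this⟩⟩
  refine ⟨t, ⟨ht0, htlt, hseteq⟩, ?_⟩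
  rintro t' ⟨ht0', htlt', hseteq'⟩
  have ha1 := haS
  have ha2 := haS
  rw [hseteq] at ha1
  rw [hseteq'] at ha2
  obtain ⟨j1, _, hj1t, hj1⟩ := ha1
  obtain ⟨j2, _, hj2t, hj2⟩ := ha2
  have hj12 : (j1 : ℤ) = (j2 : ℤ) := by
    have : g * h ^ ((j1 : ℤ)) = g * h ^ ((j2 : ℤ)) := by
      rw [zpow_natCast, zpow_natCast, ← hj1, ← hj2]
    exact hinj _ _ (mul_left_cancel this)
  have htt' : t' ≡ t [ZMOD d] := (hj2t.symm.trans (hj12 ▸ hj1t : (j2 : ℤ) ≡ t [ZMOD d]))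
  have hdvd : d ∣ t - t' := (Int.modEq_iff_dvd).mp htt'
  obtain ⟨k, hk⟩ := hdvd
  have habsk : |t - t'| < |d| := by
    rw [abs_lt]; constructor <;> omega
  rw [hk, abs_mul] at habsk
  have hk0 : k = 0 := by
    by_contra hkne
    have : 1 ≤ |k| := Int.one_le_abs (by simpa using hkne)
    nlinarith [abs_nonneg d]
  subst hk0
  rw [mul_zero] at hk
  omega
end

section
/- Let (A, ≤) be a linear order, Ω a finite set, and β : A → 2^Ω a map such that for every ω ∈ Ω the set {a ∈ A : ω ∈ β(a)} is an interval of A. Then A can be partitioned into at most 2|Ω| + 1 intervals A₁, …, A_k such that β is constant on each A_i. -/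
/-- If `β : A → 2^Ω` is such that each set `{a : ω ∈ β(a)}` is an interval of the
linear order `A`, then `A` can be partitioned into at most `2|Ω| + 1` intervals
on each of which `β` is constant. -/
theorem stmt17 {A Ω : Type*} [LinearOrder A] [Fintype Ω] (β : A → Set Ω)
    (hβ : ∀ ω : Ω, ({a : A | ω ∈ β a}).OrdConnected) :
    ∃ k : ℕ, k ≤ 2 * Fintype.card Ω + 1 ∧
      ∃ P : Fin k → Set A,
        (∀ i, (P i).OrdConnected) ∧
        (⋃ i, P i) = Set.univ ∧
        (Pairwise fun i j => Disjoint (P i) (P j)) ∧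
        ∀ i, ∀ a ∈ P i, ∀ b ∈ P i, β a = β b := by
  classical
  set n := Fintype.card Ω with hn
  set S : A → Set Ω := fun a => {ω | ∃ b ≤ a, ω ∈ β b} with hS
  set E : A → Set Ω := fun a => {ω | ∃ b ≤ a, ω ∉ β b ∧ ∃ c ≤ b, ω ∈ β c} with hE
  have hSmono : ∀ a b : A, a ≤ b → S a ⊆ S b := by
    intro a b hab ω hω
    obtain ⟨c, hca, hc⟩ := hω
    exact ⟨c, hca.trans hab, hc⟩
  have hEmono : ∀ a b : A, a ≤ b → E a ⊆ E b := by
    intro a b hab ω hω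
    obtain ⟨c, hca, hc⟩ := hω
    exact ⟨c, hca.trans hab, hc⟩
  set F : A → ℕ := fun a => (S a).ncard + (E a).ncard with hF
  have hcard : ∀ s : Set Ω, s.ncard ≤ n := by
    intro s
    have := Set.ncard_le_ncard (Set.subset_univ s) Set.finite_univ
    rwa [Set.ncard_univ, Nat.card_eq_fintype_card] at this
  have hFle : ∀ a, F a ≤ 2 * n := by
    intro a
    have := hcard (S a); have := hcard (E a)
    simp only [hF]; omega
  have hFmono : ∀ a b : A, a ≤ b → F a ≤ F b := by
    intro a b hab
    exact Nat.add_le_add (Set.ncard_le_ncard (hSmono a b hab) (Set.toFinite _))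
      (Set.ncard_le_ncard (hEmono a b hab) (Set.toFinite _))
  have key : ∀ a b : A, a ≤ b → F a = F b → β a = β b := by
    intro a b hab hFeq
    have h1 : (S a).ncard ≤ (S b).ncard :=
      Set.ncard_le_ncard (hSmono a b hab) (Set.toFinite _)
    have h2 : (E a).ncard ≤ (E b).ncard :=
      Set.ncard_le_ncard (hEmono a b hab) (Set.toFinite _)
    have hSeq : S a = S b := by
      refine Set.eq_of_subset_of_ncard_le (hSmono a b hab) ?_ (Set.toFinite _)
      simp only [hF] at hFeq; omega
    have hEeq : E a = E b := by
      refine Set.eq_of_subset_of_ncard_le (hEmono a b hab) ?_ (Set.toFinite _)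
      simp only [hF] at hFeq; omega
    ext ω
    constructor
    · intro hωa
      by_contra hωb
      have hωEb : ω ∈ E b := ⟨b, le_refl b, hωb, a, hab, hωa⟩
      rw [← hEeq] at hωEb
      obtain ⟨b', hb'a, hnb', c, hcb', hc⟩ := hωEb
      exact hnb' ((hβ ω).out hc hωa ⟨hcb', hb'a⟩)
    · intro hωb
      have hωSb : ω ∈ S b := ⟨b, le_refl b, hωb⟩
      rw [← hSeq] at hωSb
      obtain ⟨c, hca, hc⟩ := hωSb
      exact (hβ ω).out hc hωb ⟨hca, hab⟩
  refine ⟨2 * n + 1, le_refl _, fun i => {a | F a = (i : ℕ)}, ?_, ?_, ?_, ?_⟩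
  · intro i
    constructor
    intro x hx y hy z hz
    have h1 := hFmono x z hz.1
    have h2 := hFmono z y hz.2
    simp only [Set.mem_setOf_eq] at hx hy ⊢
    omega
  · ext a
    simp only [Set.mem_iUnion, Set.mem_setOf_eq, Set.mem_univ, iff_true]
    exact ⟨⟨F a, by have := hFle a; omega⟩, rfl⟩
  · intro i j hij
    rw [Set.disjoint_left]
    intro a ha hb
    simp only [Set.mem_setOf_eq] at ha hb
    exact hij (Fin.ext (ha.symm.trans hb))
  · intro i a ha b hb
    simp only [Set.mem_setOf_eq] at ha hb
    rcases le_total a b with h | h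
    · exact key a b h (ha.trans hb.symm)
    · exact (key b a h (hb.trans ha.symm)).symm
end

section
/- Let G be a finitely generated group with finite generating set Γ and let d ≥ 1. Then the map h : G^d ≀ ℤ → G ≀ ℤ defined on generators by h(t) = t^d (t being the generator of ℤ) and h(a) = t^i a t^{−i} for a a generator of the i-th copy of G (0 ≤ i ≤ d−1) extends to an injective group homomorphism, i.e., G^d ≀ ℤ embeds into G ≀ ℤ. -/
/-- Multiplication in the wreath product `G ≀ ℤ`: elements are pairs `(f, n)`
with `f : ℤ → G` of finite support and `n ∈ ℤ`, and
`(f₁,n₁)(f₂,n₂) = (a ↦ f₁(a) f₂(a - n₁), n₁ + n₂)`. -/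
def wmulZ {G : Type*} [Group G] (x y : (ℤ → G) × ℤ) : (ℤ → G) × ℤ :=
  (fun a => x.1 a * y.1 (a - x.2), x.2 + y.2)

/-- The finitely supported function placing the single element `v` at
position `c ∈ ℤ`. -/
def placed {G : Type*} [One G] (c : ℤ) (v : G) : ℤ → G :=
  fun n => if n = c then v else 1

lemma placed_finite {G : Type*} [One G] (c : ℤ) (v : G) :
    (Function.mulSupport (placed c v)).Finite := by
  apply Set.Finite.subset (Set.finite_singleton c)
  intro n hn
  rw [Function.mem_mulSupport] at hn
  by_contra hnc
  exact hn (if_neg (by simpa using hnc))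

lemma one_finite (G : Type*) [Group G] :
    (Function.mulSupport (fun _ : ℤ => (1 : G))).Finite := by
  apply Set.Finite.subset (Set.finite_empty)
  intro n hn
  rw [Function.mem_mulSupport] at hn
  exact hn rfl

/-- Unfold `f : ℤ → Fin d → G` into `ℤ → G` via division with remainder. -/
def auxF {G : Type*} [One G] (d : ℕ) (hd : 1 ≤ d) (f : ℤ → Fin d → G) (m : ℤ) : G :=
  f (m / (d : ℤ)) ⟨(m % (d : ℤ)).toNat, by
    have hpos : (0 : ℤ) < d := by exact_mod_cast hd
    have h1 : 0 ≤ m % (d : ℤ) := Int.emod_nonneg m hpos.ne'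
    have h2 : m % (d : ℤ) < d := Int.emod_lt_of_pos m hpos
    omega⟩

lemma auxF_apply {G : Type*} [One G] (d : ℕ) (hd : 1 ≤ d) (f : ℤ → Fin d → G)
    (q : ℤ) (j : Fin d) : auxF d hd f ((j : ℤ) + q * d) = f q j := by
  have hpos : (0 : ℤ) < d := by exact_mod_cast hd
  have hj : ((j : ℤ) + q * d) / d = q := by
    rw [Int.add_mul_ediv_right _ _ hpos.ne',
      Int.ediv_eq_zero_of_lt (by positivity) (by exact_mod_cast j.isLt), zero_add]
  have hm : ((j : ℤ) + q * d) % d = (j : ℤ) := by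
    rw [Int.add_mul_emod_self_right, Int.emod_eq_of_lt (by positivity) (by exact_mod_cast j.isLt)]
  unfold auxF
  congr 1
  apply Fin.ext
  simp [hm]

lemma auxF_finite {G : Type*} [One G] (d : ℕ) (hd : 1 ≤ d) (f : ℤ → Fin d → G)
    (hf : (Function.mulSupport f).Finite) :
    (Function.mulSupport (auxF d hd f)).Finite := by
  apply Set.Finite.subset
    (((hf.prod (Set.finite_Ico (0 : ℤ) d)).image (fun p : ℤ × ℤ => p.2 + p.1 * d)))
  intro m hm
  rw [Function.mem_mulSupport] at hm
  have hpos : (0 : ℤ) < d := by exact_mod_cast hd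
  refine ⟨(m / d, m % d), ⟨?_, Int.emod_nonneg m hpos.ne', Int.emod_lt_of_pos m hpos⟩, ?_⟩
  · rw [Function.mem_mulSupport]
    intro h
    exact hm (by unfold auxF; rw [h]; rfl)
  · simp only
    rw [mul_comm]
    exact Int.emod_add_mul_ediv m d

lemma auxF_inj {G : Type*} [One G] (d : ℕ) (hd : 1 ≤ d) (f g : ℤ → Fin d → G)
    (h : auxF d hd f = auxF d hd g) : f = g := by
  funext q j
  have := congrFun h ((j : ℤ) + q * d)
  rwa [auxF_apply, auxF_apply] at this

lemma auxF_shift {G : Type*} [One G] (d : ℕ) (hd : 1 ≤ d) (f : ℤ → Fin d → G)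
    (m n : ℤ) : auxF d hd f (m - d * n) =
      f (m / d - n) ⟨(m % (d : ℤ)).toNat, by
        have hpos : (0 : ℤ) < d := by exact_mod_cast hd
        have h1 := Int.emod_nonneg m hpos.ne'
        have h2 := Int.emod_lt_of_pos m hpos
        omega⟩ := by
  have hpos : (0 : ℤ) < d := by exact_mod_cast hd
  have e1 : m - d * n = m + (-n) * d := by ring
  have hdiv : (m - d * n) / d = m / d - n := by
    rw [e1, Int.add_mul_ediv_right _ _ hpos.ne']; ring
  have hmod : (m - d * n) % d = m % d := by
    rw [e1, Int.add_mul_emod_self_right]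
  unfold auxF
  rw [hdiv]
  congr 1
  apply Fin.ext
  simp [hmod]

/-- The wreath product `Gᵈ ≀ ℤ` embeds into `G ≀ ℤ` via an injective group
homomorphism `φ` with `φ(t) = t^d` (where `t` is the generator of `ℤ`) and
`φ(a) = t^i a t^{-i}` for an element `a` of the `i`-th copy of `G`
(sitting at the origin), `0 ≤ i ≤ d - 1`. Elements of `G ≀ ℤ` are modelled as
pairs in `(ℤ → G) × ℤ` with finitely supported function part, with
multiplication `wmulZ`. -/
theorem stmt18 {G : Type*} [Group G] (d : ℕ) (hd : 1 ≤ d) :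
    ∃ φ : {x : (ℤ → (Fin d → G)) × ℤ // (Function.mulSupport x.1).Finite} →
          {x : (ℤ → G) × ℤ // (Function.mulSupport x.1).Finite},
      Function.Injective φ ∧
      (∀ x y z, z.1 = wmulZ x.1 y.1 → (φ z).1 = wmulZ (φ x).1 (φ y).1) ∧
      (φ ⟨((fun _ => 1), 1), one_finite _⟩ = ⟨((fun _ => 1), (d : ℤ)), one_finite G⟩) ∧
      (∀ i : Fin d, ∀ a : G,
        φ ⟨(placed 0 (fun j => if j = i then a else 1), 0),
            placed_finite 0 _⟩ =
          ⟨(placed (i : ℤ) a, 0), placed_finite (i : ℤ) a⟩) := by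
  have hpos : (0 : ℤ) < d := by exact_mod_cast hd
  refine ⟨fun x => ⟨(auxF d hd x.1.1, d * x.1.2), auxF_finite d hd _ x.2⟩, ?_, ?_, ?_, ?_⟩
  · -- injective
    rintro ⟨⟨xf, xn⟩, hx⟩ ⟨⟨yf, yn⟩, hy⟩ h
    simp only [Subtype.mk.injEq, Prod.mk.injEq] at h
    obtain ⟨h1, h2⟩ := h
    exact Subtype.ext (Prod.ext (auxF_inj d hd _ _ h1) (mul_left_cancel₀ hpos.ne' h2))
  · -- homomorphism
    rintro ⟨⟨xf, xn⟩, hx⟩ ⟨⟨yf, yn⟩, hy⟩ ⟨⟨zf, zn⟩, hz⟩ heq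
    simp only [wmulZ, Prod.mk.injEq] at heq
    obtain ⟨hzf, hzn⟩ := heq
    simp only [wmulZ, Prod.mk.injEq]
    refine ⟨funext fun m => ?_, by rw [hzn]; ring⟩
    rw [auxF_shift d hd yf m xn, hzf]
    rfl
  · -- image of t
    exact Subtype.ext (Prod.ext (funext fun m => rfl) (mul_one _))
  · -- image of generators
    intro i a
    refine Subtype.ext (Prod.ext (funext fun m => ?_) (mul_zero _))
    simp only [auxF, placed]
    by_cases hm : m = (i : ℤ)
    · subst hm
      have h0 : (i : ℤ) / d = 0 :=
        Int.ediv_eq_zero_of_lt (by positivity) (by exact_mod_cast i.isLt)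
      have h1 : (i : ℤ) % d = (i : ℤ) :=
        Int.emod_eq_of_lt (by positivity) (by exact_mod_cast i.isLt)
      rw [if_pos h0]
      simp [h1, Fin.ext_iff]
    · rw [if_neg hm]
      by_cases hq : m / (d : ℤ) = 0
      · rw [if_pos hq]
        have h2 := Int.emod_add_mul_ediv m d
        rw [hq, mul_zero, add_zero] at h2
        rw [if_neg]
        intro heq
        have h3 : (m % (d : ℤ)).toNat = (i : ℕ) := congrArg Fin.val heq
        have h4 : 0 ≤ m % (d : ℤ) := Int.emod_nonneg m hpos.ne'
        omega
      · rw [if_neg hq]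
        rfl
end
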